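/- (Coordinate update rule for Q^(3) is the unique minimizer, Equation (updatePhiM3).) Fix finite index sets I and J ⊆ I × I, real numbers λ₂ and λ₃ not both zero, and: for each t ∈ I a matrix Ē²_t ∈ ℝ^{d × d_t} and a vector ψ_t ∈ ℝ^{d_t}; for each (s,t) ∈ J a three-way array Ē³_{st} : {1,…,d} × {1,…,d_s} × {1,…,d_t} → ℝ. Define q : ℝ^d → ℝ by q(φ) = λ₂-term plus λ₃-term: q(φ) = Σ_{t ∈ I} ‖Ē²_t − λ₂ φ ψ_t^T‖_F² + Σ_{(s,t) ∈ J} Σ_{a,b,c} (Ē³_{st}(a,b,c) − λ₃ φ_a (ψ_s)_b (ψ_t)_c)². Assume the denominator D = λ₂² Σ_{t ∈ I} ψ_t^T ψ_t + λ₃² Σ_{(s,t) ∈ J} (ψ_s^T ψ_s)(ψ_t^T ψ_t) is strictly positive. Then q attains a unique global minimum at φ* whose a-th coordinate is φ*_a = ( λ₂ Σ_{t ∈ I} (Ē²_t ψ_t)_a + λ₃ Σ_{(s,t) ∈ J} Σ_{b,c} Ē³_{st}(a,b,c) (ψ_s)_b (ψ_t)_c ) / D. -/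

import Mathlib

open scoped BigOperators

/-- Coordinate update rule for `Q⁽³⁾` is the unique global minimizer (Equation (updatePhiM3)). -/
theorem q3_update_unique_minimizer
    {ι : Type*} [Fintype ι] (d : ℕ) (dt : ι → ℕ)
    (lam2 lam3 : ℝ) (hlam : lam2 ≠ 0 ∨ lam3 ≠ 0)
    (E2 : (t : ι) → Matrix (Fin d) (Fin (dt t)) ℝ)
    (ψ : (t : ι) → Fin (dt t) → ℝ)
    (J : Finset (ι × ι))
    (E3 : (s t : ι) → Fin d → Fin (dt s) → Fin (dt t) → ℝ)
    (hD : 0 < lam2 ^ 2 * (∑ t : ι, ∑ b : Fin (dt t), ψ t b ^ 2) +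
        lam3 ^ 2 * ∑ p ∈ J, (∑ b : Fin (dt p.1), ψ p.1 b ^ 2) *
          (∑ c : Fin (dt p.2), ψ p.2 c ^ 2))
    (q : (Fin d → ℝ) → ℝ)
    (hq : ∀ φ, q φ =
      (∑ t : ι, ∑ a : Fin d, ∑ b : Fin (dt t), (E2 t a b - lam2 * φ a * ψ t b) ^ 2) +
        ∑ p ∈ J, ∑ a : Fin d, ∑ b : Fin (dt p.1), ∑ c : Fin (dt p.2),
          (E3 p.1 p.2 a b c - lam3 * φ a * ψ p.1 b * ψ p.2 c) ^ 2)
    (φstar : Fin d → ℝ)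
    (hφstar : ∀ a, φstar a =
      (lam2 * (∑ t : ι, ∑ b : Fin (dt t), E2 t a b * ψ t b) +
          lam3 * ∑ p ∈ J, ∑ b : Fin (dt p.1), ∑ c : Fin (dt p.2),
            E3 p.1 p.2 a b c * ψ p.1 b * ψ p.2 c) /
        (lam2 ^ 2 * (∑ t : ι, ∑ b : Fin (dt t), ψ t b ^ 2) +
          lam3 ^ 2 * ∑ p ∈ J, (∑ b : Fin (dt p.1), ψ p.1 b ^ 2) *
            (∑ c : Fin (dt p.2), ψ p.2 c ^ 2))) :
    ∀ φ : Fin d → ℝ, φ ≠ φstar → q φstar < q φ := by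
  classical
  intro φ hφ
  set S2 : ℝ := ∑ t : ι, ∑ b : Fin (dt t), ψ t b ^ 2 with hS2
  set S3 : ℝ := ∑ p ∈ J, (∑ b : Fin (dt p.1), ψ p.1 b ^ 2) *
      (∑ c : Fin (dt p.2), ψ p.2 c ^ 2) with hS3
  set D : ℝ := lam2 ^ 2 * S2 + lam3 ^ 2 * S3 with hDdef
  set N : Fin d → ℝ := fun a =>
    lam2 * (∑ t : ι, ∑ b : Fin (dt t), E2 t a b * ψ t b) +
      lam3 * ∑ p ∈ J, ∑ b : Fin (dt p.1), ∑ c : Fin (dt p.2),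
        E3 p.1 p.2 a b c * ψ p.1 b * ψ p.2 c with hNdef
  have hDpos : 0 < D := hD
  have hDne : D ≠ 0 := ne_of_gt hDpos
  have hNφ : ∀ a, N a = D * φstar a := by
    intro a
    rw [hφstar a]
    field_simp
    rfl
  -- expansion of the matrix part, coordinatewise in `a`
  have h2 : ∀ (χ : Fin d → ℝ) (a : Fin d),
      (∑ t : ι, ∑ b : Fin (dt t), (E2 t a b - lam2 * χ a * ψ t b) ^ 2)
        = (∑ t : ι, ∑ b : Fin (dt t), E2 t a b ^ 2)
          - 2 * lam2 * χ a * (∑ t : ι, ∑ b : Fin (dt t), E2 t a b * ψ t b)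
          + lam2 ^ 2 * χ a ^ 2 * S2 := by
    intro χ a
    rw [hS2]
    simp only [Finset.mul_sum, ← Finset.sum_sub_distrib, ← Finset.sum_add_distrib]
    refine Finset.sum_congr rfl fun t _ => ?_
    refine Finset.sum_congr rfl fun b _ => ?_
    ring
  have h3 : ∀ (χ : Fin d → ℝ) (a : Fin d),
      (∑ p ∈ J, ∑ b : Fin (dt p.1), ∑ c : Fin (dt p.2),
          (E3 p.1 p.2 a b c - lam3 * χ a * ψ p.1 b * ψ p.2 c) ^ 2)
        = (∑ p ∈ J, ∑ b : Fin (dt p.1), ∑ c : Fin (dt p.2), E3 p.1 p.2 a b c ^ 2)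
          - 2 * lam3 * χ a * (∑ p ∈ J, ∑ b : Fin (dt p.1), ∑ c : Fin (dt p.2),
              E3 p.1 p.2 a b c * ψ p.1 b * ψ p.2 c)
          + lam3 ^ 2 * χ a ^ 2 * S3 := by
    intro χ a
    rw [hS3]
    simp only [Finset.sum_mul_sum, Finset.mul_sum,
      ← Finset.sum_sub_distrib, ← Finset.sum_add_distrib]
    refine Finset.sum_congr rfl fun p _ => ?_
    have hrw : (∑ i : Fin (dt p.2), lam3 ^ 2 * χ a ^ 2 *
          ((∑ b : Fin (dt p.1), ψ p.1 b ^ 2) * ψ p.2 i ^ 2))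
        = ∑ b : Fin (dt p.1), ∑ c : Fin (dt p.2),
            lam3 ^ 2 * χ a ^ 2 * (ψ p.1 b ^ 2 * ψ p.2 c ^ 2) := by
      rw [Finset.sum_comm]
      refine Finset.sum_congr rfl fun i _ => ?_
      rw [Finset.sum_mul, Finset.mul_sum]
    rw [hrw, ← Finset.sum_add_distrib]
    refine Finset.sum_congr rfl fun b _ => ?_
    rw [← Finset.sum_add_distrib]
    refine Finset.sum_congr rfl fun c _ => ?_
    ring
  have key : ∀ χ : Fin d → ℝ, q χ =
      ((∑ a : Fin d, ∑ t : ι, ∑ b : Fin (dt t), E2 t a b ^ 2) +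
        (∑ a : Fin d, ∑ p ∈ J, ∑ b : Fin (dt p.1), ∑ c : Fin (dt p.2),
          E3 p.1 p.2 a b c ^ 2)) +
        ∑ a : Fin d, (D * χ a ^ 2 - 2 * N a * χ a) := by
    intro χ
    rw [hq]
    have hswap2 : (∑ t : ι, ∑ a : Fin d, ∑ b : Fin (dt t),
        (E2 t a b - lam2 * χ a * ψ t b) ^ 2)
        = ∑ a : Fin d, ∑ t : ι, ∑ b : Fin (dt t),
          (E2 t a b - lam2 * χ a * ψ t b) ^ 2 := Finset.sum_comm
    have hswap3 : (∑ p ∈ J, ∑ a : Fin d, ∑ b : Fin (dt p.1), ∑ c : Fin (dt p.2),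
        (E3 p.1 p.2 a b c - lam3 * χ a * ψ p.1 b * ψ p.2 c) ^ 2)
        = ∑ a : Fin d, ∑ p ∈ J, ∑ b : Fin (dt p.1), ∑ c : Fin (dt p.2),
          (E3 p.1 p.2 a b c - lam3 * χ a * ψ p.1 b * ψ p.2 c) ^ 2 := Finset.sum_comm
    rw [hswap2, hswap3, ← Finset.sum_add_distrib, add_assoc,
      ← Finset.sum_add_distrib, ← Finset.sum_add_distrib]
    refine Finset.sum_congr rfl fun a _ => ?_
    rw [h2 χ a, h3 χ a, hNdef, hDdef]
    ring
  have hdiff : q φ - q φstar = ∑ a : Fin d, D * (φ a - φstar a) ^ 2 := by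
    rw [key φ, key φstar, add_sub_add_left_eq_sub, ← Finset.sum_sub_distrib]
    refine Finset.sum_congr rfl fun a _ => ?_
    rw [hNφ a]
    ring
  have hpos : 0 < ∑ a : Fin d, D * (φ a - φstar a) ^ 2 := by
    obtain ⟨a, ha⟩ := Function.ne_iff.mp hφ
    refine Finset.sum_pos' (fun i _ => by positivity) ⟨a, Finset.mem_univ a, ?_⟩
    have : φ a - φstar a ≠ 0 := sub_ne_zero.mpr ha
    positivity
  linarith [hdiff, hpos]
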